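/- Every free product of finitely many finitely generated abelian groups contains a finite-index subgroup which is isomorphic to a free product of finitely many free abelian groups. -/

import Mathlib

open Monoid CoprodI Function

namespace Stmt9Aux

/-! ### Congruence helpers for `CoprodI` -/

section congr

variable {ι κ : Type*}

/-- Cast a monoid hom along an equality of indices in a family. -/
def famCast (M : ι → Type*) [∀ i, Monoid (M i)] {i j : ι} (h : i = j) : M i →* M j :=
  h ▸ MonoidHom.id (M i)

theorem of_famCast (M : ι → Type*) [∀ i, Monoid (M i)] {i j : ι} (h : i = j) (x : M i) :
    (CoprodI.of (famCast M h x) : CoprodI M) = CoprodI.of x := by subst h; rfl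

/-- Factor-wise congruence of coproducts. -/
def coprodICongrRight {M : ι → Type*} {N : ι → Type*} [∀ i, Monoid (M i)] [∀ i, Monoid (N i)]
    (f : ∀ i, M i ≃* N i) : CoprodI M ≃* CoprodI N :=
  MonoidHom.toMulEquiv
    (CoprodI.lift fun i => CoprodI.of.comp (f i).toMonoidHom)
    (CoprodI.lift fun i => CoprodI.of.comp (f i).symm.toMonoidHom)
    (CoprodI.ext_hom _ _ fun i => by ext x; simp [CoprodI.lift_of])
    (CoprodI.ext_hom _ _ fun i => by ext x; simp [CoprodI.lift_of])

theorem of_comp_cast (M : ι → Type*) [∀ i, Monoid (M i)] (e : κ ≃ ι) {j j' : κ}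
    (h : j' = j) (hh : e j = e j') (y : M (e j)) :
    (CoprodI.of (M := fun j => M (e j)) (i := j') (famCast M hh y)) =
      CoprodI.of (M := fun j => M (e j)) (i := j) y := by
  subst h; rfl

/-- Reindexing congruence of coproducts. -/
def coprodIReindex (M : ι → Type*) [∀ i, Monoid (M i)] (e : κ ≃ ι) :
    CoprodI M ≃* CoprodI (fun j => M (e j)) :=
  MonoidHom.toMulEquiv
    (CoprodI.lift fun i => (CoprodI.of (M := fun j => M (e j)) (i := e.symm i)).comp
      (famCast M (e.apply_symm_apply i).symm))
    (CoprodI.lift fun j => (CoprodI.of (M := M) (i := e j)))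
    (CoprodI.ext_hom _ _ fun i => by
      ext x
      simp only [MonoidHom.comp_apply, CoprodI.lift_of, MonoidHom.id_apply]
      exact of_famCast M _ x)
    (CoprodI.ext_hom _ _ fun j => by
      ext y
      simp only [MonoidHom.comp_apply, CoprodI.lift_of, MonoidHom.id_apply]
      exact of_comp_cast M e (e.symm_apply_apply j) _ y)

end congr

/-- Free abelian group of rank `m`, multiplicatively. -/
abbrev FA (m : ℕ) : Type := Multiplicative (Fin m → ℤ)

/-- `Multiplicative ℤ` is free abelian of rank 1. -/
def zEquivFA1 : Multiplicative ℤ ≃* FA 1 :=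
  AddEquiv.toMultiplicative (AddEquiv.piUnique (fun _ : Fin 1 => ℤ)).symm

section Main

variable {k : ℕ} (n : Fin k → ℕ) (T : Fin k → Type) [∀ i, CommGroup (T i)]

/-- The factors: free abelian times finite. -/
abbrev AG : Fin k → Type := fun i => FA (n i) × T i

local notation "GG" => CoprodI (AG n T)

/-- The torsion quotient map. -/
def phi : GG →* (∀ j, T j) :=
  CoprodI.lift fun i => (MonoidHom.mulSingle (fun j => T j) i).comp (MonoidHom.snd _ _)

theorem phi_of (i : Fin k) (a : AG n T i) :
    phi n T (CoprodI.of a) = Pi.mulSingle i a.2 := by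
  rw [phi, CoprodI.lift_of]; rfl

/-- Partial transversal words. -/
def sigL (l : List (Fin k)) (q : ∀ j, T j) : GG :=
  (l.map fun i => (CoprodI.of (M := AG n T) ((1, q i) : AG n T i))).prod

/-- The transversal. -/
def sig (q : ∀ j, T j) : GG := sigL n T (List.finRange k) q

theorem sigL_nil (q : ∀ j, T j) : sigL n T [] q = 1 := rfl

theorem sigL_cons (i : Fin k) (l : List (Fin k)) (q : ∀ j, T j) :
    sigL n T (i :: l) q = CoprodI.of (M := AG n T) ((1, q i) : AG n T i) * sigL n T l q := by
  simp [sigL]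

theorem sigL_eq_one (l : List (Fin k)) (q : ∀ j, T j) (h : ∀ j ∈ l, q j = 1) :
    sigL n T l q = 1 := by
  induction l with
  | nil => rfl
  | cons i l ih =>
    rw [sigL_cons, h i (by simp), ih fun j hj => h j (by simp [hj])]
    simp [Prod.mk_one_one]

theorem sigL_congr (l : List (Fin k)) (q q' : ∀ j, T j) (h : ∀ j ∈ l, q j = q' j) :
    sigL n T l q = sigL n T l q' := by
  induction l with
  | nil => rfl
  | cons i l ih =>
    rw [sigL_cons, sigL_cons, h i (by simp), ih fun j hj => h j (by simp [hj])]

theorem sig_one : sig n T 1 = 1 :=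
  sigL_eq_one n T _ _ fun _ _ => rfl

/-- Zero out one coordinate. -/
def hatQ (q : ∀ j, T j) (i : Fin k) : ∀ j, T j := Function.update q i 1

theorem hatQ_apply (q : ∀ j, T j) (i : Fin k) : hatQ T q i i = 1 :=
  Function.update_self i 1 q

theorem hatQ_mul_single (q : ∀ j, T j) (i : Fin k) (t : T i) :
    hatQ T (q * Pi.mulSingle i t) i = hatQ T q i := by
  funext j
  rcases eq_or_ne j i with rfl | hj
  · rw [hatQ_apply, hatQ_apply]
  · simp [hatQ, Function.update_of_ne hj, Pi.mulSingle_eq_of_ne hj]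

theorem mul_single_inv_eq_hat (q : ∀ j, T j) (i : Fin k) :
    q * Pi.mulSingle i (q i)⁻¹ = hatQ T q i := by
  funext j
  rcases eq_or_ne j i with rfl | hj
  · simp [hatQ]
  · simp [hatQ, Function.update_of_ne hj, Pi.mulSingle_eq_of_ne hj]

theorem hatQ_eq_self (q : ∀ j, T j) (i : Fin k) (h : q i = 1) : hatQ T q i = q := by
  rw [hatQ, ← h, Function.update_eq_self]

/-- Tree-edge condition. -/
def treeP (q : ∀ j, T j) (i : Fin k) : Prop := q i = 1 ∨ ∀ j, i < j → q j = 1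

theorem sigL_split (l : List (Fin k)) (hl : l.Pairwise (· < ·)) (q : ∀ j, T j) (i : Fin k)
    (hi : i ∈ l) (htail : ∀ j, i < j → q j = 1) :
    sigL n T l q = sigL n T l (hatQ T q i) * CoprodI.of (M := AG n T) ((1, q i) : AG n T i) := by
  induction l with
  | nil => simp at hi
  | cons a l ih =>
    rw [List.pairwise_cons] at hl
    rcases List.mem_cons.mp hi with rfl | hi'
    · have h2 : sigL n T l q = 1 :=
        sigL_eq_one n T _ _ fun j hj => htail j (hl.1 j hj)
      have h3 : sigL n T l (hatQ T q i) = 1 :=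
        sigL_eq_one n T _ _ fun j hj => by
          rw [hatQ, Function.update_of_ne (hl.1 j hj).ne']
          exact htail j (hl.1 j hj)
      rw [sigL_cons, sigL_cons, h2, h3, hatQ_apply]
      simp [Prod.mk_one_one]
    · have ha : a ≠ i := fun h => by
        subst h
        exact lt_irrefl a (hl.1 a hi')
      rw [sigL_cons, sigL_cons, ih hl.2 hi', hatQ, Function.update_of_ne ha, mul_assoc]

theorem sig_split (q : ∀ j, T j) (i : Fin k) (htail : ∀ j, i < j → q j = 1) :
    sig n T q = sig n T (hatQ T q i) * CoprodI.of (M := AG n T) ((1, q i) : AG n T i) :=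
  sigL_split n T _ (List.pairwise_lt_finRange k) q i (List.mem_finRange i) htail

theorem phi_sigL (l : List (Fin k)) (q : ∀ j, T j) :
    phi n T (sigL n T l q) = (l.map fun i => Pi.mulSingle i (q i)).prod := by
  induction l with
  | nil => simp [sigL_nil]
  | cons i l ih =>
    rw [sigL_cons, map_mul, ih, phi_of, List.map_cons, List.prod_cons]

theorem phi_sig (q : ∀ j, T j) : phi n T (sig n T q) = q := by
  rw [sig, phi_sigL]
  have : ((List.finRange k).map fun i => Pi.mulSingle i (q i)).prod
      = ∏ i : Fin k, Pi.mulSingle i (q i) := (Fin.prod_univ_def _).symm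
  rw [this, Finset.univ_prod_mulSingle]

/-- `z`-elements. -/
def zel (q : ∀ j, T j) (i : Fin k) : GG :=
  sig n T q * CoprodI.of (M := AG n T) ((1, (q i)⁻¹) : AG n T i) * (sig n T (hatQ T q i))⁻¹

theorem zel_tree (q : ∀ j, T j) (i : Fin k) (h : treeP T q i) : zel n T q i = 1 := by
  rcases h with h | h
  · rw [zel, hatQ_eq_self T q i h, h]
    simp [Prod.mk_one_one]
  · rw [zel, sig_split n T q i h]
    have : (CoprodI.of (M := AG n T) ((1, q i) : AG n T i)) * (CoprodI.of (M := AG n T) ((1, (q i)⁻¹) : AG n T i)) = 1 := by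
      rw [← map_mul, Prod.mk_mul_mk, one_mul, mul_inv_cancel]
      simp [Prod.mk_one_one]
    rw [mul_assoc (sig n T (hatQ T q i)), this]
    simp

/-- Index type of the pieces. -/
def JIdx := (Σ i : Fin k, {q : ∀ j, T j // q i = 1}) ⊕ {e : (∀ j, T j) × Fin k // ¬ treeP T e.1 e.2}

/-- The pieces. -/
def BFam : JIdx T → Type
  | .inl s => FA (n s.1)
  | .inr _ => Multiplicative ℤ

instance : ∀ j : JIdx T, CommGroup (BFam n T j)
  | .inl _ => inferInstanceAs (CommGroup (FA _))
  | .inr _ => inferInstanceAs (CommGroup (Multiplicative ℤ))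

instance (s : Σ i : Fin k, {q : ∀ j, T j // q i = 1}) : CommGroup (BFam n T (.inl s)) :=
  inferInstanceAs (CommGroup (FA _))

instance (e : {e : (∀ j, T j) × Fin k // ¬ treeP T e.1 e.2}) : CommGroup (BFam n T (.inr e)) :=
  inferInstanceAs (CommGroup (Multiplicative ℤ))

local notation "CC" => CoprodI (BFam n T)

/-- Generators of abelian pieces. -/
def vof (i : Fin k) (q : ∀ j, T j) (hq : q i = 1) : FA (n i) →* CC :=
  CoprodI.of (M := BFam n T) (i := Sum.inl ⟨i, ⟨q, hq⟩⟩)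

theorem vof_congr (i : Fin k) {q q' : ∀ j, T j} (h : q = q') (h1 : q i = 1) (h2 : q' i = 1)
    (f : FA (n i)) : vof n T i q h1 f = vof n T i q' h2 f := by subst h; rfl

/-- Generators of the `ℤ` pieces (or `1` for tree edges). -/
noncomputable def zhat (q : ∀ j, T j) (i : Fin k) : CC :=
  letI := Classical.dec (¬ treeP T q i)
  if h : ¬ treeP T q i then
    CoprodI.of (M := BFam n T) (i := Sum.inr ⟨(q, i), h⟩) (Multiplicative.ofAdd (1 : ℤ))
  else 1

theorem zhat_tree (q : ∀ j, T j) (i : Fin k) (h : treeP T q i) : zhat n T q i = 1 := by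
  rw [zhat]; exact dif_neg (not_not_intro h)

theorem zhat_nontree (q : ∀ j, T j) (i : Fin k) (h : ¬ treeP T q i) :
    zhat n T q i = CoprodI.of (M := BFam n T) (i := Sum.inr ⟨(q, i), h⟩)
      (Multiplicative.ofAdd (1 : ℤ)) := by
  rw [zhat]; exact dif_pos h

/-- The homs from the pieces back to `G`. -/
def psiF : ∀ j : JIdx T, BFam n T j →* GG
  | .inl s => (MulAut.conj (sig n T s.2.1)).toMonoidHom.comp
      (CoprodI.of.comp (MonoidHom.inl (FA (n s.1)) (T s.1)))
  | .inr e => zpowersHom _ (zel n T e.1.1 e.1.2)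

/-- The comparison map. -/
def psi : CC →* GG := CoprodI.lift (psiF n T)

theorem psi_vof (i : Fin k) (q : ∀ j, T j) (hq : q i = 1) (f : FA (n i)) :
    psi n T (vof n T i q hq f) =
      sig n T q * CoprodI.of (M := AG n T) ((f, 1) : AG n T i) * (sig n T q)⁻¹ := by
  rw [psi, vof]
  exact CoprodI.lift_of (psiF n T) (i := Sum.inl ⟨i, ⟨q, hq⟩⟩) f

theorem psi_zgen (e : {e : (∀ j, T j) × Fin k // ¬ treeP T e.1 e.2}) :
    psi n T (CoprodI.of (M := BFam n T) (i := Sum.inr e) (Multiplicative.ofAdd (1 : ℤ))) =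
      zel n T e.1.1 e.1.2 := by
  rw [psi]
  rw [CoprodI.lift_of (psiF n T) (i := Sum.inr e) (Multiplicative.ofAdd (1 : ℤ))]
  show zpowersHom _ (zel n T e.1.1 e.1.2) (Multiplicative.ofAdd (1 : ℤ)) = _
  rw [zpowersHom_apply]
  simp

theorem zel_mem (q : ∀ j, T j) (i : Fin k) : zel n T q i ∈ (psi n T).range := by
  by_cases h : treeP T q i
  · rw [zel_tree n T q i h]; exact one_mem _
  · exact ⟨_, psi_zgen n T ⟨(q, i), h⟩⟩

theorem conj_mem (x : ∀ j, T j) (i : Fin k) (f : FA (n i)) :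
    sig n T x * CoprodI.of (M := AG n T) ((f, 1) : AG n T i) * (sig n T x)⁻¹ ∈
      (psi n T).range := by
  set s := sig n T x
  set u := sig n T (hatQ T x i)
  set a := CoprodI.of (M := AG n T) ((1, (x i)⁻¹) : AG n T i) with ha
  set b := CoprodI.of (M := AG n T) ((f, 1) : AG n T i) with hb
  set aInv := CoprodI.of (M := AG n T) ((1, x i) : AG n T i) with haInv'
  have haInv : a⁻¹ = aInv := by
    rw [ha, haInv', ← map_inv]; congr 1; simp
  have hmid : a * b * aInv = b := by
    rw [ha, hb, haInv', ← map_mul, ← map_mul]; congr 1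
    simp [Prod.mk_mul_mk]
  have key : s * b * s⁻¹ = (s * a * u⁻¹) * (u * b * u⁻¹) * (s * a * u⁻¹)⁻¹ := by
    have hrw : (s * a * u⁻¹) * (u * b * u⁻¹) * (s * a * u⁻¹)⁻¹ = s * (a * b * a⁻¹) * s⁻¹ := by
      group
    rw [hrw, haInv, hmid]
  have hz : zel n T x i = s * a * u⁻¹ := rfl
  rw [key, ← hz]
  exact mul_mem (mul_mem (zel_mem n T x i)
    ⟨vof n T i (hatQ T x i) (hatQ_apply T x i) f, psi_vof n T i _ _ f⟩)
    (inv_mem (zel_mem n T x i))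

theorem tor_mem (x : ∀ j, T j) (i : Fin k) (t : T i) :
    sig n T x * CoprodI.of (M := AG n T) ((1, t) : AG n T i) *
      (sig n T (x * Pi.mulSingle i t))⁻¹ ∈ (psi n T).range := by
  set x' : ∀ j, T j := x * Pi.mulSingle i t with hx'
  set s := sig n T x
  set s' := sig n T x'
  set u := sig n T (hatQ T x i)
  set a := CoprodI.of (M := AG n T) ((1, (x i)⁻¹) : AG n T i) with ha
  set a' := CoprodI.of (M := AG n T) ((1, (x' i)⁻¹) : AG n T i) with ha'
  set c := CoprodI.of (M := AG n T) ((1, t) : AG n T i) with hc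
  have ha'Inv : a'⁻¹ = CoprodI.of (M := AG n T) ((1, x' i) : AG n T i) := by
    rw [ha', ← map_inv]; congr 1; simp
  have hx'i : x' i = x i * t := by simp [hx']
  have hmid : a * a'⁻¹ = c := by
    rw [ha'Inv, ha, hc, ← map_mul]; congr 1
    rw [hx'i, Prod.mk_mul_mk, one_mul, inv_mul_cancel_left]
  have hu' : sig n T (hatQ T x' i) = u := by rw [hx', hatQ_mul_single]
  have key : s * c * s'⁻¹ = (s * a * u⁻¹) * (s' * a' * u⁻¹)⁻¹ := by
    have hrw : (s * a * u⁻¹) * (s' * a' * u⁻¹)⁻¹ = s * (a * a'⁻¹) * s'⁻¹ := by group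
    rw [hrw, hmid]
  have hz : zel n T x i = s * a * u⁻¹ := rfl
  have hz' : zel n T x' i = s' * a' * u⁻¹ := by rw [zel, hu']
  rw [key, ← hz, ← hz']
  exact mul_mem (zel_mem n T x i) (inv_mem (zel_mem n T x' i))


/-- Translation action of the finite quotient on functions into the pieces group. -/
def rhoAct : (∀ j, T j) →* MulAut ((∀ j, T j) → CC) where
  toFun p :=
    { toFun := fun u x => u (x * p)
      invFun := fun u x => u (x * p⁻¹)
      left_inv := fun u => funext fun x => by simp
      right_inv := fun u => funext fun x => by simp
      map_mul' := fun u v => rfl }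
  map_one' := by
    ext u x
    simp
  map_mul' p p' := by
    ext u x
    simp [mul_assoc]

/-- The rewriting cocycle. -/
noncomputable def wcoc (x : ∀ j, T j) (i : Fin k) (a : AG n T i) : CC :=
  zhat n T x i * vof n T i (hatQ T x i) (hatQ_apply T x i) a.1 *
    (zhat n T (x * Pi.mulSingle i a.2) i)⁻¹

theorem single_mul (i : Fin k) (s t : T i) :
    Pi.mulSingle (M := fun j => T j) i (s * t) =
      Pi.mulSingle i s * Pi.mulSingle i t := by
  funext x
  rcases eq_or_ne x i with rfl | h
  · simp
  · simp [Pi.mulSingle_eq_of_ne h]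

/-- The factor maps into the wreath product. -/
noncomputable def lamF (i : Fin k) :
    AG n T i →* ((∀ j, T j) → CC) ⋊[rhoAct n T] (∀ j, T j) where
  toFun a := ⟨fun x => wcoc n T x i a, Pi.mulSingle i a.2⟩
  map_one' := by
    ext x
    · show wcoc n T x i 1 = 1
      simp [wcoc]
    · show Pi.mulSingle i ((1 : AG n T i).2) x = (1 : ∀ j, T j) x
      simp
  map_mul' a b := by
    ext x
    · show wcoc n T x i (a * b) =
        wcoc n T x i a * wcoc n T (x * Pi.mulSingle i a.2) i b
      rw [wcoc, wcoc, wcoc]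
      rw [vof_congr n T i (hatQ_mul_single T x i a.2) (hatQ_apply T _ i) (hatQ_apply T x i)
        b.1]
      have hsingle : Pi.mulSingle i ((a * b).2) =
          Pi.mulSingle i a.2 * Pi.mulSingle i b.2 := by
        rw [Prod.snd_mul]
        exact single_mul T i _ _
      have hfst : (a * b).1 = a.1 * b.1 := rfl
      rw [hsingle, ← mul_assoc x, hfst, map_mul]
      group
    · show Pi.mulSingle i ((a * b).2) x = (Pi.mulSingle i a.2 * Pi.mulSingle i b.2) x
      rw [Prod.snd_mul, single_mul T i]

/-- The Reidemeister–Schreier rewriting homomorphism. -/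
noncomputable def lam : CoprodI (AG n T) →*
    ((∀ j, T j) → CC) ⋊[rhoAct n T] (∀ j, T j) :=
  CoprodI.lift (lamF n T)

theorem lam_of (i : Fin k) (a : AG n T i) :
    lam n T (CoprodI.of (M := AG n T) a) = lamF n T i a :=
  CoprodI.lift_of _ _

theorem lam_right (g : GG) : (lam n T g).right = phi n T g := by
  have h : SemidirectProduct.rightHom.comp (lam n T) = phi n T := by
    apply CoprodI.ext_hom
    intro i
    refine MonoidHom.ext fun a => ?_
    show ((lam n T) (CoprodI.of (M := AG n T) a)).right = phi n T (CoprodI.of (M := AG n T) a)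
    rw [lam_of, phi_of]
    rfl
  exact DFunLike.congr_fun h g

theorem lam_left_inv (g : GG) (x : ∀ j, T j) :
    (lam n T g⁻¹).left x = ((lam n T g).left (x * (phi n T g)⁻¹))⁻¹ := by
  rw [map_inv, SemidirectProduct.inv_left, lam_right]
  rfl

theorem lam_sigL_left (q : ∀ j, T j) (l : List (Fin k)) (hl : l.Pairwise (· < ·))
    (x : ∀ j, T j) (hx : ∀ j : Fin k, (∃ i ∈ l, i ≤ j) → x j = 1) :
    (lam n T (sigL n T l q)).left x = 1 := by
  induction l generalizing x with
  | nil =>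
    rw [sigL_nil, map_one]
    rfl
  | cons i l ih =>
    rw [List.pairwise_cons] at hl
    rw [sigL_cons, map_mul, lam_of, SemidirectProduct.mul_left]
    show wcoc n T x i (1, q i) *
      (lam n T (sigL n T l q)).left (x * Pi.mulSingle i ((1, q i) : AG n T i).2) = 1
    have hz1 : zhat n T x i = 1 :=
      zhat_tree n T x i (Or.inl (hx i ⟨i, List.mem_cons_self, le_refl i⟩))
    have hz2 : zhat n T (x * Pi.mulSingle i (q i)) i = 1 := by
      refine zhat_tree n T _ i (Or.inr fun j hj => ?_)
      rw [Pi.mul_apply, Pi.mulSingle_eq_of_ne hj.ne',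
        hx j ⟨i, List.mem_cons_self, hj.le⟩, one_mul]
    have hw : wcoc n T x i ((1 : FA (n i)), q i) = 1 := by
      rw [wcoc]
      simp [hz1, hz2]
    rw [hw, one_mul]
    refine ih hl.2 _ fun j hj => ?_
    obtain ⟨i', hi', hij⟩ := hj
    have hii' : i < i' := hl.1 i' hi'
    have hjx : x j = 1 := hx j ⟨i, List.mem_cons_self, (hii'.trans_le hij).le⟩
    rw [Pi.mul_apply, Pi.mulSingle_eq_of_ne (hii'.trans_le hij).ne', hjx, one_mul]

theorem lam_sig_left (q : ∀ j, T j) : (lam n T (sig n T q)).left 1 = 1 :=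
  lam_sigL_left n T q _ (List.pairwise_lt_finRange k) 1 fun _ _ => rfl

theorem phi_psi (c : CC) : phi n T (psi n T c) = 1 := by
  have h : (phi n T).comp (psi n T) = 1 := by
    apply CoprodI.ext_hom
    intro j
    rcases j with ⟨i, q, hq⟩ | e
    · refine MonoidHom.ext fun (f : FA (n i)) => ?_
      show phi n T (psi n T (vof n T i q hq f)) = 1
      rw [psi_vof, map_mul, map_mul, map_inv, phi_sig, phi_of]
      simp
    · refine MonoidHom.ext_mint ?_
      show phi n T (psi n T (CoprodI.of (M := BFam n T) (i := Sum.inr e)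
        (Multiplicative.ofAdd (1 : ℤ)))) = 1
      rw [psi_zgen, zel, map_mul, map_mul, map_inv, phi_sig, phi_sig, phi_of,
        mul_single_inv_eq_hat]
      simp
  have := DFunLike.congr_fun h c
  simpa using this

theorem psi_mem_ker (c : CC) : psi n T c ∈ (phi n T).ker :=
  MonoidHom.mem_ker.mpr (phi_psi n T c)

/-- The corestriction of `psi` to the kernel. -/
noncomputable def psi' : CC →* (phi n T).ker :=
  (psi n T).codRestrict _ (psi_mem_ker n T)

/-- The inverse rewriting homomorphism. -/
noncomputable def theta : (phi n T).ker →* CC where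
  toFun g := (lam n T g.1).left 1
  map_one' := by
    show (lam n T ((1 : (phi n T).ker) : GG)).left 1 = 1
    rw [OneMemClass.coe_one, map_one]
    rfl
  map_mul' g h := by
    show (lam n T (g.1 * h.1)).left 1 = (lam n T g.1).left 1 * (lam n T h.1).left 1
    rw [map_mul, SemidirectProduct.mul_left]
    show (lam n T g.1).left 1 * (lam n T h.1).left (1 * (lam n T g.1).right) = _
    rw [lam_right, MonoidHom.mem_ker.mp g.2, mul_one]

theorem theta_conj (q : ∀ j, T j) (i : Fin k) (hq : q i = 1) (f : FA (n i)) :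
    (lam n T (sig n T q * CoprodI.of (M := AG n T) ((f, 1) : AG n T i) *
      (sig n T q)⁻¹)).left 1 = vof n T i q hq f := by
  rw [map_mul, map_mul, lam_of, SemidirectProduct.mul_left, SemidirectProduct.mul_left]
  show (lam n T (sig n T q)).left 1 *
      (lamF n T i ((f, 1) : AG n T i)).left (1 * (lam n T (sig n T q)).right) *
      (lam n T (sig n T q)⁻¹).left
        (1 * ((lam n T (sig n T q)).right * (lamF n T i ((f, 1) : AG n T i)).right)) =
      vof n T i q hq f
  have h1 : (lam n T (sig n T q)).right = q := by rw [lam_right, phi_sig]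
  have hr : (lamF n T i ((f, 1) : AG n T i)).right = (1 : ∀ j, T j) := by
    show Pi.mulSingle i (1 : T i) = 1
    simp
  rw [lam_sig_left, h1, hr, mul_one]
  simp only [one_mul]
  have hL : (lamF n T i ((f, 1) : AG n T i)).left q = vof n T i q hq f := by
    show wcoc n T q i (f, 1) = _
    rw [wcoc]
    have hz1 : zhat n T q i = 1 := zhat_tree n T q i (Or.inl hq)
    have h2 : q * Pi.mulSingle i (((f, (1 : T i)) : AG n T i).2) = q := by
      show q * Pi.mulSingle i (1 : T i) = q
      simp
    rw [h2, hz1]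
    have hv : vof n T i (hatQ T q i) (hatQ_apply T q i) (((f, (1 : T i)) : AG n T i).1) =
        vof n T i q hq f := vof_congr n T i (hatQ_eq_self T q i hq) _ _ f
    rw [hv]
    simp
  have hinv : (lam n T (sig n T q)⁻¹).left q = 1 := by
    rw [lam_left_inv, phi_sig]
    have hqq : q * q⁻¹ = 1 := mul_inv_cancel q
    rw [hqq, lam_sig_left, inv_one]
  rw [hL, hinv, mul_one]

theorem theta_zel (q : ∀ j, T j) (i : Fin k) :
    (lam n T (zel n T q i)).left 1 = zhat n T q i := by
  rw [zel, map_mul, map_mul, lam_of, SemidirectProduct.mul_left, SemidirectProduct.mul_left]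
  show (lam n T (sig n T q)).left 1 *
      (lamF n T i ((1, (q i)⁻¹) : AG n T i)).left (1 * (lam n T (sig n T q)).right) *
      (lam n T (sig n T (hatQ T q i))⁻¹).left
        (1 * ((lam n T (sig n T q)).right *
          (lamF n T i ((1, (q i)⁻¹) : AG n T i)).right)) =
      zhat n T q i
  have h1 : (lam n T (sig n T q)).right = q := by rw [lam_right, phi_sig]
  have hr : (lamF n T i ((1, (q i)⁻¹) : AG n T i)).right = Pi.mulSingle i (q i)⁻¹ := rfl
  rw [lam_sig_left, h1, hr]
  simp only [one_mul]
  have hq' : q * Pi.mulSingle i (q i)⁻¹ = hatQ T q i := mul_single_inv_eq_hat T q i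
  rw [hq']
  have hL : (lamF n T i ((1, (q i)⁻¹) : AG n T i)).left q = zhat n T q i := by
    show wcoc n T q i (1, (q i)⁻¹) = _
    rw [wcoc]
    have h2 : q * Pi.mulSingle i ((((1 : FA (n i)), (q i)⁻¹) : AG n T i).2) = hatQ T q i :=
      mul_single_inv_eq_hat T q i
    rw [h2]
    have hz2 : zhat n T (hatQ T q i) i = 1 :=
      zhat_tree n T _ i (Or.inl (hatQ_apply T q i))
    rw [hz2]
    simp
  have hinv : (lam n T (sig n T (hatQ T q i))⁻¹).left (hatQ T q i) = 1 := by
    rw [lam_left_inv, phi_sig]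
    have hqq : hatQ T q i * (hatQ T q i)⁻¹ = 1 := mul_inv_cancel _
    rw [hqq, lam_sig_left, inv_one]
  rw [hL, hinv, mul_one]

theorem theta_comp_psi' : (theta n T).comp (psi' n T) = MonoidHom.id CC := by
  apply CoprodI.ext_hom
  intro j
  rcases j with ⟨i, q, hq⟩ | e
  · ext (f : FA (n i))
    show (lam n T (psi n T (vof n T i q hq f))).left 1 = vof n T i q hq f
    rw [psi_vof, theta_conj]
  · refine MonoidHom.ext_mint ?_
    show (lam n T (psi n T (CoprodI.of (M := BFam n T) (i := Sum.inr e)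
      (Multiplicative.ofAdd (1 : ℤ))))).left 1 = _
    rw [psi_zgen, theta_zel, zhat_nontree n T e.1.1 e.1.2 e.2]
    rfl

theorem ker_le_range (g : GG) (hg : g ∈ (phi n T).ker) : g ∈ (psi n T).range := by
  have main : ∀ g : GG, ∀ x : ∀ j, T j,
      sig n T x * g * (sig n T (x * phi n T g))⁻¹ ∈ (psi n T).range := by
    intro g
    induction g using CoprodI.induction_on with
    | one =>
      intro x
      rw [map_one, mul_one, mul_one, mul_inv_cancel]
      exact one_mem _
    | of i a =>
      intro x
      have hsplit : CoprodI.of (M := AG n T) a =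
          CoprodI.of (M := AG n T) ((a.1, 1) : AG n T i) *
          CoprodI.of (M := AG n T) ((1, a.2) : AG n T i) := by
        rw [← map_mul]
        congr 1
        simp [Prod.mk_mul_mk]
      have hphi : phi n T (CoprodI.of (M := AG n T) a) = Pi.mulSingle i a.2 := phi_of n T i a
      rw [hphi, hsplit]
      have key : sig n T x * (CoprodI.of (M := AG n T) ((a.1, 1) : AG n T i) *
          CoprodI.of (M := AG n T) ((1, a.2) : AG n T i)) *
          (sig n T (x * Pi.mulSingle i a.2))⁻¹ =
          (sig n T x * CoprodI.of (M := AG n T) ((a.1, 1) : AG n T i) * (sig n T x)⁻¹) *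
          (sig n T x * CoprodI.of (M := AG n T) ((1, a.2) : AG n T i) *
            (sig n T (x * Pi.mulSingle i a.2))⁻¹) := by
        group
      rw [key]
      exact mul_mem (conj_mem n T x i a.1) (tor_mem n T x i a.2)
    | mul g h ihg ihh =>
      intro x
      have hx : x * phi n T (g * h) = (x * phi n T g) * phi n T h := by
        rw [map_mul, mul_assoc]
      have key : sig n T x * (g * h) * (sig n T ((x * phi n T g) * phi n T h))⁻¹ =
          (sig n T x * g * (sig n T (x * phi n T g))⁻¹) *
          (sig n T (x * phi n T g) * h * (sig n T ((x * phi n T g) * phi n T h))⁻¹) := by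
        group
      rw [hx, key]
      exact mul_mem (ihg x) (ihh (x * phi n T g))
  have h1 := main g 1
  rwa [MonoidHom.mem_ker.mp hg, mul_one, sig_one, one_mul, inv_one, mul_one] at h1

/-- Ranks of the pieces. -/
def rkF : JIdx T → ℕ
  | .inl s => n s.1
  | .inr _ => 1

/-- Each piece is free abelian. -/
noncomputable def pieceIso : ∀ j : JIdx T, BFam n T j ≃* FA (rkF n T j)
  | .inl _ => MulEquiv.refl _
  | .inr _ => zEquivFA1

instance [∀ i, Finite (T i)] : Finite (JIdx T) :=
  inferInstanceAs (Finite ((Σ i : Fin k, {q : ∀ j, T j // q i = 1}) ⊕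
    {e : (∀ j, T j) × Fin k // ¬ treeP T e.1 e.2}))

theorem main' [∀ i, Finite (T i)] :
    ∃ H : Subgroup GG, H.FiniteIndex ∧ ∃ (k' : ℕ) (r' : Fin k' → ℕ),
      Nonempty (H ≃* CoprodI fun m : Fin k' => FA (r' m)) := by
  refine ⟨(phi n T).ker, inferInstance, ?_⟩
  have hinj : Function.Injective (psi' n T) := by
    have h := theta_comp_psi' n T
    intro c c' hcc
    have h2 : (theta n T) ((psi' n T) c) = (theta n T) ((psi' n T) c') := by rw [hcc]
    rwa [← MonoidHom.comp_apply, ← MonoidHom.comp_apply, h, MonoidHom.id_apply,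
      MonoidHom.id_apply] at h2
  have hsurj : Function.Surjective (psi' n T) := by
    rintro ⟨g, hg⟩
    obtain ⟨c, hc⟩ := ker_le_range n T g hg
    exact ⟨c, Subtype.ext hc⟩
  obtain ⟨k', ⟨eJ⟩⟩ := Finite.exists_equiv_fin (JIdx T)
  refine ⟨k', fun m => rkF n T (eJ.symm m), ?_⟩
  have E1 : CC ≃* CoprodI (fun j : JIdx T => FA (rkF n T j)) :=
    coprodICongrRight (pieceIso n T)
  have E2 := coprodIReindex (fun j : JIdx T => FA (rkF n T j)) eJ.symm
  exact ⟨(MulEquiv.ofBijective _ ⟨hinj, hsurj⟩).symm.trans (E1.trans E2)⟩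


end Main

end Stmt9Aux

/-- A free product of finitely many finitely generated abelian groups has a
finite-index subgroup isomorphic to a free product of finitely many free abelian
groups. -/
theorem stmt_9 (ι : Type*) [Finite ι] (A : ι → Type*) [∀ i, CommGroup (A i)]
    [∀ i, Group.FG (A i)] :
    ∃ H : Subgroup (Monoid.CoprodI A), H.FiniteIndex ∧
      ∃ (k : ℕ) (r : Fin k → ℕ), Nonempty
        (H ≃* Monoid.CoprodI (fun i : Fin k => Multiplicative (Fin (r i) → ℤ))) := by
  classical
  obtain ⟨kk, ⟨eι⟩⟩ := Finite.exists_equiv_fin ι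
  have hch : ∀ i : Fin kk, ∃ (m : ℕ) (S : Type) (_ : AddCommGroup S) (_ : Finite S),
      Nonempty (A (eι.symm i) ≃* Stmt9Aux.FA m × Multiplicative S) := by
    intro i
    obtain ⟨m, ιD, fιD, p, hp, eexp, ⟨eq⟩⟩ :=
      AddCommGroup.equiv_free_prod_directSum_zmod (Additive (A (eι.symm i)))
    haveI := fιD
    haveI : ∀ r, NeZero (p r ^ eexp r) := fun r => ⟨pow_ne_zero _ (hp r).pos.ne'⟩
    refine ⟨m, (DirectSum ιD fun r => ZMod (p r ^ eexp r)), inferInstance,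
      Finite.of_equiv _ (DFinsupp.equivFunOnFintype).symm, ?_⟩
    have e1 : A (eι.symm i) ≃* Multiplicative ((Fin m →₀ ℤ) × DirectSum ιD fun r => ZMod (p r ^ eexp r)) :=
      AddEquiv.toMultiplicativeRight eq
    exact ⟨e1.trans ((MulEquiv.prodMultiplicative _ _).trans
      (MulEquiv.prodCongr (AddEquiv.toMultiplicative Finsupp.addEquivFunOnFinite)
        (MulEquiv.refl _)))⟩
  choose m S iS fS hIso using hch
  letI : ∀ i, AddCommGroup (S i) := iS
  haveI : ∀ i, Finite (S i) := fS
  let T : Fin kk → Type := fun i => Multiplicative (S i)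
  letI instT : ∀ i, CommGroup (T i) := fun i => Multiplicative.commGroup
  haveI instTF : ∀ i, Finite (T i) := fun i => Finite.of_equiv (S i) Multiplicative.ofAdd
  let E : Monoid.CoprodI A ≃* Monoid.CoprodI (Stmt9Aux.AG m T) :=
    (Stmt9Aux.coprodIReindex A eι.symm).trans
      (Stmt9Aux.coprodICongrRight fun i => Classical.choice (hIso i))
  obtain ⟨H', hFI, k', r', ⟨isoH⟩⟩ := Stmt9Aux.main' m T
  refine ⟨H'.map (E.symm : _ →* _), ?_, k', r', ⟨?_⟩⟩
  · refine ⟨?_⟩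
    have hker : (E.symm : Monoid.CoprodI (Stmt9Aux.AG m T) →* Monoid.CoprodI A).ker = ⊥ :=
      (MonoidHom.ker_eq_bot_iff _).mpr E.symm.injective
    rw [Subgroup.index_map_eq _ E.symm.surjective (by rw [hker]; exact bot_le)]
    exact hFI.index_ne_zero
  · exact (MulEquiv.subgroupMap E.symm H').symm.trans isoH
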